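/- Let G = (V, E) be a graph of bounded maximum degree Δ(G), fix a distinguished color a ∈ Δ(G)+1, and let d : E ⇀ Δ(G)+1 be a proper partial edge coloring. Then for every edge f ∈ E there are at most 2Δ(G) edges e ∈ E with d(e) = a such that f belongs to the alternating path P^d(e). -/
import Mathlib


/-- The edge set of the graph, as unordered pairs. -/
def EdgeSet {V : Type*} (E : Set (V × V)) : Set (Sym2 V) :=
  {e : Sym2 V | ∃ x y : V, (x, y) ∈ E ∧ e = s(x, y)}

/-- `c` (with domain `dom`) is a proper partial edge coloring with `k` colors:
the domain consists of edges, colors are `< k`, and distinct edges of the domain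
sharing a vertex get distinct colors. -/
def IsProperPartialColoring {V : Type*} (E : Set (V × V)) (k : ℕ)
    (dom : Set (Sym2 V)) (c : Sym2 V → ℕ) : Prop :=
  dom ⊆ EdgeSet E ∧ (∀ e ∈ dom, c e < k) ∧
    ∀ e ∈ dom, ∀ f ∈ dom, e ≠ f → (∃ u : V, u ∈ e ∧ u ∈ f) → c e ≠ c f

/-- The color `γ` is missing at the vertex `v` for the partial coloring `c` on `dom`. -/
def MissingAt {V : Type*} (dom : Set (Sym2 V)) (c : Sym2 V → ℕ) (γ : ℕ) (v : V) : Prop :=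
  ∀ e ∈ dom, v ∈ e → c e ≠ γ

/-- The set of edges of the maximal alternating `β/γ` path of `c` starting at `v`
(the union of all finite alternating walks starting at `v` with first color `β`). -/
def AltPathEdges {V : Type*} (dom : Set (Sym2 V)) (c : Sym2 V → ℕ) (β γ : ℕ) (v : V) :
    Set (Sym2 V) :=
  {f : Sym2 V | ∃ (n : ℕ) (x : ℕ → V), x 0 = v ∧
    (∀ i ≤ n, s(x i, x (i + 1)) ∈ dom ∧
      c s(x i, x (i + 1)) = (if Even i then β else γ)) ∧
    f = s(x n, x (n + 1))}

/-- The path `P^c(e)`: the edge `e` followed by the maximal alternating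
`βe e / γe e` path starting at the chosen endpoint `ve e`. -/
def PPath {V : Type*} (dom : Set (Sym2 V)) (c : Sym2 V → ℕ)
    (ve : Sym2 V → V) (βe γe : Sym2 V → ℕ) (e : Sym2 V) : Set (Sym2 V) :=
  insert e (AltPathEdges dom c (βe e) (γe e) (ve e))

/-- Validity of the choice data defining `P^c(e)` at an edge `e` of color `a`:
`ve e` is an endpoint of `e`, the colors `βe e`, `γe e` are in `k` and differ from `a`,
`γe e` is missing at `ve e` and `βe e` is missing at the other endpoint of `e`. -/
def ValidChoice {V : Type*} (k : ℕ) (dom : Set (Sym2 V)) (c : Sym2 V → ℕ) (a : ℕ)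
    (ve : Sym2 V → V) (βe γe : Sym2 V → ℕ) (e : Sym2 V) : Prop :=
  ve e ∈ e ∧ βe e < k ∧ γe e < k ∧ βe e ≠ a ∧ γe e ≠ a ∧
    MissingAt dom c (γe e) (ve e) ∧
    ∃ w : V, e = s(ve e, w) ∧ MissingAt dom c (βe e) w


lemma backcolor (β γ n j : ℕ) (hj : j ≤ n) :
    (if Even (n - j) then β else γ) =
      if Even j then (if Even n then β else γ) else (if Even n then γ else β) := by
  simp only [Nat.even_sub hj]
  by_cases hn : Even n <;> by_cases hh : Even j <;> simp [hn, hh]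

lemma trace_eq {V : Type*} {dom : Set (Sym2 V)} {d : Sym2 V → ℕ}
    (hnd : ∀ g ∈ dom, ¬ g.IsDiag)
    (hpr : ∀ e ∈ dom, ∀ g ∈ dom, e ≠ g → (∃ u : V, u ∈ e ∧ u ∈ g) → d e ≠ d g)
    {A B : ℕ} {x : ℕ → V} {n β γ : ℕ}
    (hx : ∀ i ≤ n, s(x i, x (i+1)) ∈ dom ∧ d s(x i, x (i+1)) = if Even i then β else γ)
    (hA : (if Even n then β else γ) = A) (hB : (if Even n then γ else β) = B)
    {x' : ℕ → V} {n' β' γ' : ℕ}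
    (hx' : ∀ i ≤ n', s(x' i, x' (i+1)) ∈ dom ∧ d s(x' i, x' (i+1)) = if Even i then β' else γ')
    (hA' : (if Even n' then β' else γ') = A) (hB' : (if Even n' then γ' else β') = B)
    (hend : x n = x' n')
    (j : ℕ) : j ≤ n → j ≤ n' → x (n - j) = x' (n' - j) := by
  induction j with
  | zero => intro _ _; simpa using hend
  | succ j ih =>
    intro hj hj'
    have ihv := ih (by omega) (by omega)
    have e1 : n - (j+1) + 1 = n - j := by omega
    have e1' : n' - (j+1) + 1 = n' - j := by omega
    have hg := hx (n - (j+1)) (by omega)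
    have hg' := hx' (n' - (j+1)) (by omega)
    rw [e1] at hg; rw [e1'] at hg'
    have hc : d s(x (n-(j+1)), x (n-j)) = d s(x' (n'-(j+1)), x' (n'-j)) := by
      rw [hg.2, hg'.2, backcolor β γ n (j+1) hj, backcolor β' γ' n' (j+1) hj',
        hA, hB, hA', hB']
    have heq : s(x (n-(j+1)), x (n-j)) = s(x' (n'-(j+1)), x' (n'-j)) := by
      by_contra hne
      exact hpr _ hg.1 _ hg'.1 hne ⟨x (n-j), by simp, by rw [ihv]; simp⟩ hc
    rw [ihv, Sym2.eq_iff] at heq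
    rcases heq with ⟨h, _⟩ | ⟨h2, h3⟩
    · exact h
    · exact absurd (Sym2.mk_isDiag_iff.mpr h3.symm) (hnd _ hg'.1)

lemma trace_le {V : Type*} {dom : Set (Sym2 V)} {d : Sym2 V → ℕ}
    (hnd : ∀ g ∈ dom, ¬ g.IsDiag)
    (hpr : ∀ e ∈ dom, ∀ g ∈ dom, e ≠ g → (∃ u : V, u ∈ e ∧ u ∈ g) → d e ≠ d g)
    {A B : ℕ} {x : ℕ → V} {n β γ : ℕ}
    (hx : ∀ i ≤ n, s(x i, x (i+1)) ∈ dom ∧ d s(x i, x (i+1)) = if Even i then β else γ)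
    (hA : (if Even n then β else γ) = A) (hB : (if Even n then γ else β) = B)
    {x' : ℕ → V} {n' β' γ' : ℕ}
    (hx' : ∀ i ≤ n', s(x' i, x' (i+1)) ∈ dom ∧ d s(x' i, x' (i+1)) = if Even i then β' else γ')
    (hA' : (if Even n' then β' else γ') = A) (hB' : (if Even n' then γ' else β') = B)
    (hend : x n = x' n')
    (hmiss : ∀ e ∈ dom, x 0 ∈ e → d e ≠ γ) : n' ≤ n := by
  by_contra hlt
  push_neg at hlt
  have hv : x (n - n) = x' (n' - n) :=
    trace_eq hnd hpr hx hA hB hx' hA' hB' hend n le_rfl (le_of_lt hlt)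
  simp only [Nat.sub_self] at hv
  have hg' := hx' (n' - (n+1)) (by omega)
  have e1 : n' - (n+1) + 1 = n' - n := by omega
  rw [e1] at hg'
  apply hmiss _ hg'.1 (by rw [hv]; simp)
  rw [hg'.2, backcolor β' γ' n' (n+1) (by omega), hA', hB', ← hA, ← hB]
  rcases Nat.even_or_odd n with hn | hn <;>
    simp [hn, Nat.even_add_one, Nat.not_even_iff_odd]

/-- For a graph of maximum degree at most `D`, a proper partial edge coloring `d` with
`D+1` colors and a distinguished color `a`, every edge `f` belongs to the alternating
path `P^d(e)` of at most `2D` edges `e` of color `a`. -/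
theorem card_edges_with_f_in_alternating_path_le
    {V : Type*}
    (E : Set (V × V))
    (hsym : ∀ x y : V, (x, y) ∈ E → (y, x) ∈ E)
    (hirr : ∀ x : V, (x, x) ∉ E)
    (D : ℕ)
    (hdeg : ∀ v : V, {w | (v, w) ∈ E}.Finite ∧ {w | (v, w) ∈ E}.ncard ≤ D)
    (a : ℕ) (ha : a < D + 1)
    (dom : Set (Sym2 V)) (d : Sym2 V → ℕ)
    (hproper : IsProperPartialColoring E (D + 1) dom d)
    (ve : Sym2 V → V) (βe γe : Sym2 V → ℕ)
    (hchoice : ∀ e ∈ dom, d e = a → ValidChoice (D + 1) dom d a ve βe γe e)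
    (f : Sym2 V) (hf : f ∈ EdgeSet E) :
    {e ∈ dom | d e = a ∧ f ∈ PPath dom d ve βe γe e}.Finite ∧
      {e ∈ dom | d e = a ∧ f ∈ PPath dom d ve βe γe e}.ncard ≤ 2 * D := by
  classical
  obtain ⟨x₀, y₀, hxy, hfxy⟩ := hf
  obtain ⟨hdomE, hlt, hpr⟩ := hproper
  have hnd : ∀ g ∈ dom, ¬ g.IsDiag := by
    intro g hg hdiag
    obtain ⟨p, q, hpq, rfl⟩ := hdomE hg
    rw [Sym2.mk_isDiag_iff] at hdiag
    exact hirr p (hdiag ▸ hpq)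
  have hx0y0 : x₀ ≠ y₀ := by rintro rfl; exact hirr _ hxy
  have hD1 : 1 ≤ D := by
    have hd := hdeg x₀
    have hne : {w | (x₀, w) ∈ E}.Nonempty := ⟨y₀, hxy⟩
    have := (Set.ncard_pos hd.1).mpr hne
    omega
  set S := {e ∈ dom | d e = a ∧ f ∈ PPath dom d ve βe γe e} with hS
  by_cases hfd : f ∈ dom
  swap
  · have hSe : S = ∅ := by
      ext e
      simp only [hS, Set.mem_setOf_eq, Set.mem_empty_iff_false, iff_false, not_and]
      rintro he hea hP
      rcases hP with hP | hP
      · exact hfd (hP ▸ he)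
      · obtain ⟨n, x, -, hx, hfe⟩ := hP
        exact hfd (hfe ▸ (hx n le_rfl).1)
    rw [hSe]; simp
  -- βe e ≠ γe e for every relevant e; and in the Alt case, d f ∈ {βe e, γe e}
  by_cases hfa : d f = a
  · -- S ⊆ {f}
    have hsub : S ⊆ {f} := by
      rintro e ⟨he, hea, hP⟩
      rcases hP with hP | hP
      · simp [hP]
      · exfalso
        obtain ⟨-, -, -, hba, hga, -, -⟩ := hchoice e he hea
        obtain ⟨n, x, -, hx, hfe⟩ := hP
        have hcol := (hx n le_rfl).2
        rw [← hfe, hfa] at hcol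
        split at hcol
        · exact hba hcol.symm
        · exact hga hcol.symm
    refine ⟨(Set.finite_singleton f).subset hsub, ?_⟩
    calc S.ncard ≤ ({f} : Set (Sym2 V)).ncard :=
          Set.ncard_le_ncard hsub (Set.finite_singleton f)
      _ = 1 := Set.ncard_singleton f
      _ ≤ 2 * D := by omega
  · -- main case
    have key : ∀ e ∈ S, ∃ (n : ℕ) (x : ℕ → V), x 0 = ve e ∧
        (∀ i ≤ n, s(x i, x (i + 1)) ∈ dom ∧
          d s(x i, x (i + 1)) = (if Even i then βe e else γe e)) ∧
        f = s(x n, x (n + 1)) := by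
      rintro e ⟨he, hea, hP⟩
      rcases hP with hP | hP
      · exact absurd (hP ▸ hea) hfa
      · exact hP
    set T : Finset (V × ℕ) := ({x₀, y₀} : Finset V) ×ˢ ((Finset.range (D+1)).erase (d f))
      with hT
    have hTcard : T.card = 2 * D := by
      rw [hT, Finset.card_product, Finset.card_pair hx0y0,
        Finset.card_erase_of_mem (Finset.mem_range.mpr (hlt f hfd)), Finset.card_range]
      omega
    set Φ : Sym2 V → V × ℕ := fun e =>
      if h : ∃ (n : ℕ) (x : ℕ → V), x 0 = ve e ∧
          (∀ i ≤ n, s(x i, x (i + 1)) ∈ dom ∧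
            d s(x i, x (i + 1)) = (if Even i then βe e else γe e)) ∧
          f = s(x n, x (n + 1)) then
        (h.choose_spec.choose h.choose, if Even h.choose then γe e else βe e)
      else (x₀, 0) with hΦ
    -- facts about Φ on S
    have main : ∀ e ∈ S, ∃ (n : ℕ) (x : ℕ → V), x 0 = ve e ∧
        (∀ i ≤ n, s(x i, x (i + 1)) ∈ dom ∧
          d s(x i, x (i + 1)) = (if Even i then βe e else γe e)) ∧
        f = s(x n, x (n + 1)) ∧
        Φ e = (x n, if Even n then γe e else βe e) := by
      intro e he
      have h := key e he
      refine ⟨h.choose, h.choose_spec.choose, h.choose_spec.choose_spec.1,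
        h.choose_spec.choose_spec.2.1, h.choose_spec.choose_spec.2.2, ?_⟩
      rw [hΦ]; simp only [dif_pos h]
    have hbgne : ∀ e ∈ S, βe e ≠ γe e := by
      intro e he hbg
      obtain ⟨n, x, hx0, hx, -⟩ := key e he
      obtain ⟨-, -, -, -, -, hmiss, -⟩ := hchoice e he.1 he.2.1
      have h0 := hx 0 (Nat.zero_le n)
      exact hmiss _ h0.1 (by rw [← hx0]; simp) (by rw [h0.2]; simp [hbg])
    have hmaps : ∀ e ∈ S, Φ e ∈ (T : Set (V × ℕ)) := by
      intro e he
      obtain ⟨n, x, hx0, hx, hfe, hΦe⟩ := main e he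
      obtain ⟨-, hbk, hgk, -, -, -, -⟩ := hchoice e he.1 he.2.1
      have hne := hbgne e he
      have hdf : d f = if Even n then βe e else γe e := by
        rw [hfe]; exact (hx n le_rfl).2
      have hxn : x n = x₀ ∨ x n = y₀ := by
        have : x n ∈ f := by rw [hfe]; simp
        rw [hfxy, Sym2.mem_iff] at this
        exact this
      have hc' : (if Even n then γe e else βe e) ≠ d f := by
        rw [hdf]
        rcases Nat.even_or_odd n with hn | hn
        · rw [if_pos hn, if_pos hn]; exact Ne.symm hne
        · rw [if_neg (Nat.not_even_iff_odd.mpr hn), if_neg (Nat.not_even_iff_odd.mpr hn)]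
          exact hne
      have hck : (if Even n then γe e else βe e) < D + 1 := by
        split <;> [exact hgk; exact hbk]
      rw [hΦe]
      simp only [Finset.mem_coe, hT, Finset.mem_product, Finset.mem_insert,
        Finset.mem_singleton, Finset.mem_erase, Finset.mem_range]
      exact ⟨hxn, hc', hck⟩
    have hinj : Set.InjOn Φ S := by
      intro e he e' he' hΦeq
      obtain ⟨n, x, hx0, hx, hfe, hΦe⟩ := main e he
      obtain ⟨n', x', hx0', hx', hfe', hΦe'⟩ := main e' he'
      rw [hΦe, hΦe'] at hΦeq
      have hend : x n = x' n' := congrArg Prod.fst hΦeq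
      have hBeq : (if Even n then γe e else βe e) = (if Even n' then γe e' else βe e') :=
        congrArg Prod.snd hΦeq
      have hAe : (if Even n then βe e else γe e) = d f := by
        rw [hfe]; exact ((hx n le_rfl).2).symm
      have hAe' : (if Even n' then βe e' else γe e') = d f := by
        rw [hfe']; exact ((hx' n' le_rfl).2).symm
      obtain ⟨hvee, -, -, -, -, hmiss, -⟩ := hchoice e he.1 he.2.1
      obtain ⟨hvee', -, -, -, -, hmiss', -⟩ := hchoice e' he'.1 he'.2.1
      have hmx : ∀ g ∈ dom, x 0 ∈ g → d g ≠ γe e := by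
        intro g hg hxg; exact hmiss g hg (hx0 ▸ hxg)
      have hmx' : ∀ g ∈ dom, x' 0 ∈ g → d g ≠ γe e' := by
        intro g hg hxg; exact hmiss' g hg (hx0' ▸ hxg)
      have h1 : n' ≤ n := trace_le hnd hpr hx hAe rfl hx' hAe' hBeq.symm hend hmx
      have h2 : n ≤ n' := trace_le hnd hpr hx' hAe' rfl hx hAe hBeq hend.symm hmx'
      have hnn : n = n' := le_antisymm h2 h1
      have hv0 : x 0 = x' 0 := by
        have := trace_eq hnd hpr hx hAe rfl hx' hAe' hBeq.symm hend n le_rfl (hnn ▸ le_rfl)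
        simpa [hnn] using this
      have hveq : ve e = ve e' := by rw [← hx0, ← hx0', hv0]
      by_contra hne
      exact hpr e he.1 e' he'.1 hne ⟨ve e, hvee, hveq ▸ hvee'⟩
        (by rw [he.2.1, he'.2.1])
    have hfin : S.Finite :=
      Set.Finite.of_finite_image (T.finite_toSet.subset (Set.image_subset_iff.mpr hmaps)) hinj
    refine ⟨hfin, ?_⟩
    calc S.ncard ≤ (T : Set (V × ℕ)).ncard :=
          Set.ncard_le_ncard_of_injOn Φ hmaps hinj T.finite_toSet
      _ = T.card := Set.ncard_coe_finset T
      _ = 2 * D := hTcard
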